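/- If an effect A is coexistent with both effects B and C, then for every λ with 0 ≤ λ ≤ 1, the effects A and λB + (1−λ)C are coexistent. -/

import Mathlib

/-- Effects `A` and `B` are coexistent: there is a four-outcome POVM `(G₁,G₂,G₃,G₄)`
with `A = G₁ + G₂` and `B = G₁ + G₃`. -/
def Coexistent {H : Type*} [NormedAddCommGroup H] [InnerProductSpace ℂ H] [CompleteSpace H]
    (A B : H →L[ℂ] H) : Prop :=
  ∃ G₁ G₂ G₃ G₄ : H →L[ℂ] H,
    0 ≤ G₁ ∧ 0 ≤ G₂ ∧ 0 ≤ G₃ ∧ 0 ≤ G₄ ∧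
    G₁ + G₂ + G₃ + G₄ = 1 ∧ A = G₁ + G₂ ∧ B = G₁ + G₃

lemma smul_nonneg_op {H : Type*} [NormedAddCommGroup H] [InnerProductSpace ℂ H]
    [CompleteSpace H] {c : ℝ} (hc : 0 ≤ c) {G : H →L[ℂ] H} (hG : 0 ≤ G) :
    (0 : H →L[ℂ] H) ≤ c • G := by
  rw [ContinuousLinearMap.nonneg_iff_isPositive, ContinuousLinearMap.isPositive_def'] at hG ⊢
  refine ⟨?_, fun x => ?_⟩
  · rw [IsSelfAdjoint, star_smul, star_trivial, hG.1.star_eq]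
  · have h := hG.2 x
    simp only [ContinuousLinearMap.reApplyInnerSelf, ContinuousLinearMap.smul_apply] at *
    rw [RCLike.real_smul_eq_coe_smul (K := ℂ), inner_smul_left, RCLike.conj_ofReal,
      RCLike.re_ofReal_mul]
    exact mul_nonneg hc h

theorem coexistent_convex {H : Type*} [NormedAddCommGroup H] [InnerProductSpace ℂ H]
    [CompleteSpace H] (A B C : H →L[ℂ] H)
    (hA : 0 ≤ A ∧ A ≤ 1) (hB : 0 ≤ B ∧ B ≤ 1) (hC : 0 ≤ C ∧ C ≤ 1)
    (hAB : Coexistent A B) (hAC : Coexistent A C)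
    (lam : ℝ) (hlam : 0 ≤ lam ∧ lam ≤ 1) :
    Coexistent A (lam • B + (1 - lam) • C) := by
  obtain ⟨G₁, G₂, G₃, G₄, hg1, hg2, hg3, hg4, hgsum, hgA, hgB⟩ := hAB
  obtain ⟨F₁, F₂, F₃, F₄, hf1, hf2, hf3, hf4, hfsum, hfA, hfC⟩ := hAC
  have hl1 : (0:ℝ) ≤ 1 - lam := by linarith [hlam.2]
  refine ⟨lam • G₁ + (1 - lam) • F₁, lam • G₂ + (1 - lam) • F₂,
    lam • G₃ + (1 - lam) • F₃, lam • G₄ + (1 - lam) • F₄,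
    add_nonneg (smul_nonneg_op hlam.1 hg1) (smul_nonneg_op hl1 hf1),
    add_nonneg (smul_nonneg_op hlam.1 hg2) (smul_nonneg_op hl1 hf2),
    add_nonneg (smul_nonneg_op hlam.1 hg3) (smul_nonneg_op hl1 hf3),
    add_nonneg (smul_nonneg_op hlam.1 hg4) (smul_nonneg_op hl1 hf4), ?_, ?_, ?_⟩
  · have h1 : lam • G₁ + (1 - lam) • F₁ + (lam • G₂ + (1 - lam) • F₂) +
        (lam • G₃ + (1 - lam) • F₃) + (lam • G₄ + (1 - lam) • F₄) =
        lam • (G₁ + G₂ + G₃ + G₄) + (1 - lam) • (F₁ + F₂ + F₃ + F₄) := by module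
    rw [h1, hgsum, hfsum, ← add_smul]
    simp
  · have h1 : lam • G₁ + (1 - lam) • F₁ + (lam • G₂ + (1 - lam) • F₂) =
        lam • (G₁ + G₂) + (1 - lam) • (F₁ + F₂) := by module
    rw [h1, ← hgA, ← hfA, ← add_smul]
    simp
  · have h1 : lam • G₁ + (1 - lam) • F₁ + (lam • G₃ + (1 - lam) • F₃) =
        lam • (G₁ + G₃) + (1 - lam) • (F₁ + F₃) := by module
    rw [h1, ← hgB, ← hfC]
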